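/- Let j ≥ 0, {Q_λ} the grid of cubes of side 2^j in ℝ^{n+1}, writing Q_λ = Q_{λ(x)} × Q_{λ(t)} with Q_{λ(x)} ⊂ ℝ^n and Q_{λ(t)} ⊂ ℝ. If 1 ≤ q, r ≤ 2, then (Σ_λ ‖F χ_{Q_λ}‖₁²)^{1/2} ≤ C 2^{j(n/r' + 1/q')} ‖F‖_{L^q_t L^r_x}, where r', q' are conjugate exponents. -/

import Mathlib

open MeasureTheory ENNReal

noncomputable section

/-- A cube in `ℝⁿ` with center `c` and side length `r`. -/
def cube (n : ℕ) (c : EuclideanSpace ℝ (Fin n)) (r : ℝ) : Set (EuclideanSpace ℝ (Fin n)) :=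
  {x | ∀ i, |x i - c i| ≤ r / 2}

/-- A cube in space-time `ℝⁿ × ℝ ≅ ℝ^{n+1}` with center `(c, τ)` and side length `r`. -/
def cubeP (n : ℕ) (c : EuclideanSpace ℝ (Fin n)) (τ r : ℝ) :
    Set (EuclideanSpace ℝ (Fin n) × ℝ) :=
  (cube n c r) ×ˢ Set.Icc (τ - r / 2) (τ + r / 2)

/-- The cube of the grid `{Q_λ}_{λ ∈ 2^j ℤ^{n+1}}` of side `s` centered at the lattice
point `2^j λ`, for `λ ∈ ℤ^{n+1} ≅ ℤⁿ × ℤ`. -/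
def gridCube (n j : ℕ) (l : (Fin n → ℤ) × ℤ) (s : ℝ) :
    Set (EuclideanSpace ℝ (Fin n) × ℝ) :=
  cubeP n (WithLp.toLp 2 (fun i : Fin n => (2 : ℝ) ^ j * (l.1 i : ℝ))) ((2 : ℝ) ^ j * (l.2 : ℝ)) s

/-- The Morrey–Campanato norm on `ℝ^{n+1}`. -/
def morreyNormP (n : ℕ) (α p : ℝ) (w : EuclideanSpace ℝ (Fin n) × ℝ → ℝ) : ℝ≥0∞ :=
  ⨆ (c : EuclideanSpace ℝ (Fin n)) (τ : ℝ) (r : ℝ) (_ : 0 < r),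
    ENNReal.ofReal (r ^ α) * (ENNReal.ofReal (r ^ ((n : ℝ) + 1)))⁻¹ ^ (1 / p) *
      (∫⁻ z in cubeP n c τ r, ENNReal.ofReal (|w z| ^ p)) ^ (1 / p)

/-- The mixed norm `‖F‖_{L^q_t L^r_x} = (∫ (∫ |F(x,t)|^r dx)^{q/r} dt)^{1/q}`. -/
def mixedNorm (n : ℕ) (q r : ℝ) (F : EuclideanSpace ℝ (Fin n) × ℝ → ℂ) : ℝ≥0∞ :=
  (∫⁻ t : ℝ, ((∫⁻ x : EuclideanSpace ℝ (Fin n), (‖F (x, t)‖₊ : ℝ≥0∞) ^ r) ^ (1 / r)) ^ q) ^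
    (1 / q)

/-! ### Auxiliary lemmas -/

/-- `S^(p-1) * S = S^p` in `ℝ≥0∞`, for `1 ≤ p`. -/
lemma aux_rpow_sub_one_mul {S : ℝ≥0∞} {p : ℝ} (hp : 1 ≤ p) : S ^ (p - 1) * S = S ^ p := by
  have h : S ^ p = S ^ (p - 1) * S ^ (1:ℝ) := by
    rw [← ENNReal.rpow_add_of_nonneg _ _ (by linarith) zero_le_one]; norm_num
  rw [h, ENNReal.rpow_one]

/-- Hölder with a constant function: `∫ g ≤ μ(univ)^(1-1/p) (∫ g^p)^(1/p)`. -/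
lemma aux_lintegral_le_measure_rpow {α : Type*} [MeasurableSpace α]
    (μ : Measure α) (g : α → ℝ≥0∞) (hg : AEMeasurable g μ) {p : ℝ} (hp : 1 ≤ p) :
    ∫⁻ a, g a ∂μ ≤ (μ Set.univ) ^ (1 - 1/p) * (∫⁻ a, g a ^ p ∂μ) ^ (1/p) := by
  rcases eq_or_lt_of_le hp with h1 | h1
  · simp [← h1]
  · have hpq : p.HolderConjugate (Real.conjExponent p) := Real.HolderConjugate.conjExponent h1
    have h2 := ENNReal.lintegral_mul_le_Lp_mul_Lq μ hpq hg aemeasurable_const (g := fun _ => 1)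
    simp only [mul_one, ENNReal.one_rpow, lintegral_const, one_mul] at h2
    have he : 1 / Real.conjExponent p = 1 - 1/p := by
      have := hpq.inv_add_inv_eq_one
      simp only [one_div]; linarith
    rw [mul_comm]
    rw [he] at h2
    simpa using h2

/-- `ℓ¹ ⊆ ℓᵖ`-type inequality for `tsum` in `ℝ≥0∞`. -/
lemma aux_tsum_rpow_le_rpow_tsum {ι : Type*} [Countable ι] (f : ι → ℝ≥0∞) {p : ℝ} (hp : 1 ≤ p) :
    ∑' i, f i ^ p ≤ (∑' i, f i) ^ p := by
  have hp0 : (0:ℝ) < p := lt_of_lt_of_le one_pos hp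
  set S := ∑' i, f i with hS
  rcases eq_or_ne S ⊤ with h | h
  · rw [h, ENNReal.top_rpow_of_pos hp0]; exact le_top
  · have hfS : ∀ i, f i ≤ S := fun i => ENNReal.le_tsum i
    calc ∑' i, f i ^ p ≤ ∑' i, S ^ (p - 1) * f i := by
          refine ENNReal.tsum_le_tsum fun i => ?_
          have h2 : f i ^ p = f i ^ (p - 1) * f i := (aux_rpow_sub_one_mul hp).symm
          rw [h2]
          exact mul_le_mul_left (ENNReal.rpow_le_rpow (hfS i) (by linarith)) _
    _ = S ^ (p - 1) * S := by rw [ENNReal.tsum_mul_left]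
    _ = S ^ p := aux_rpow_sub_one_mul hp

/-- Minkowski's integral inequality for a countable family (`ℓᵖ`-valued). -/
lemma aux_minkowski_tsum_lintegral {ι : Type*} [Countable ι] [MeasurableSpace ι]
    [MeasurableSingletonClass ι]
    {α : Type*} [MeasurableSpace α] (μ : Measure α) (w : ι → α → ℝ≥0∞)
    (hw : ∀ i, Measurable (w i)) {p : ℝ} (hp : 1 ≤ p) :
    ∑' i, (∫⁻ a, w i a ∂μ) ^ p ≤ (∫⁻ a, (∑' i, w i a ^ p) ^ (1/p) ∂μ) ^ p := by
  have hp0 : (0:ℝ) < p := lt_of_lt_of_le one_pos hp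
  rcases eq_or_lt_of_le hp with h1 | h1
  · simp only [← h1, ENNReal.rpow_one, one_div, inv_one]
    rw [lintegral_tsum fun i => (hw i).aemeasurable]
  set R := ∫⁻ a, (∑' i, w i a ^ p) ^ (1/p) ∂μ with hR
  rcases eq_or_ne R ⊤ with hRtop | hRtop
  · rw [hRtop, ENNReal.top_rpow_of_pos hp0]; exact le_top
  have hwleS : ∀ i a, w i a ≤ (∑' i', w i' a ^ p) ^ (1/p) := by
    intro i a
    have h2 : w i a = (w i a ^ p) ^ (1/p) := by
      rw [← ENNReal.rpow_mul, mul_one_div_cancel hp0.ne', ENNReal.rpow_one]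
    rw [h2]
    exact ENNReal.rpow_le_rpow (ENNReal.le_tsum i) (by positivity)
  have hTleR : ∀ i, (∫⁻ a, w i a ∂μ) ≤ R := fun i => lintegral_mono (fun a => hwleS i a)
  rw [ENNReal.tsum_eq_iSup_sum]
  refine iSup_le fun L => ?_
  set T : ι → ℝ≥0∞ := fun i => ∫⁻ a, w i a ∂μ with hT
  set S := ∑ i ∈ L, T i ^ p with hSdef
  have hSfin : S ≠ ⊤ := by
    refine (ENNReal.sum_lt_top.mpr fun i _ => ?_).ne
    exact ENNReal.rpow_lt_top_of_nonneg hp0.le (((hTleR i).trans_lt hRtop.lt_top).ne)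
  rcases eq_or_ne S 0 with hS0 | hS0
  · rw [hS0]; exact bot_le
  have hpq : p.HolderConjugate (Real.conjExponent p) := Real.HolderConjugate.conjExponent h1
  set p' := Real.conjExponent p with hp'
  have key : S ≤ S ^ (1/p') * R := by
    have step1 : S = ∫⁻ a, ∑ i ∈ L, T i ^ (p-1) * w i a ∂μ := by
      rw [lintegral_finset_sum _ fun i _ => ((hw i).const_mul _)]
      refine Finset.sum_congr rfl fun i _ => ?_
      rw [lintegral_const_mul' _ _ (ENNReal.rpow_lt_top_of_nonneg (by linarith)
        (((hTleR i).trans_lt hRtop.lt_top).ne)).ne, aux_rpow_sub_one_mul hp]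
    have step2 : ∀ a, ∑ i ∈ L, T i ^ (p-1) * w i a ≤ S ^ (1/p') * (∑' i, w i a ^ p) ^ (1/p) := by
      intro a
      classical
      set f : ι → ℝ≥0∞ := fun i => if i ∈ L then T i ^ (p-1) else 0 with hf
      have hfg : ∑ i ∈ L, T i ^ (p-1) * w i a = ∑' i, f i * w i a := by
        rw [tsum_eq_sum (s := L) (fun i hi => by simp [hf, if_neg hi])]
        exact Finset.sum_congr rfl fun i hi => by simp [hf, if_pos hi]
      have hold := ENNReal.lintegral_mul_le_Lp_mul_Lq (Measure.count : Measure ι) hpq.symm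
        (measurable_of_countable f).aemeasurable
        (measurable_of_countable (fun i => w i a)).aemeasurable
      rw [lintegral_count] at hold
      simp only [lintegral_count] at hold
      have hf' : (∑' i, f i ^ p') = S := by
        rw [tsum_eq_sum (s := L) (fun i hi => by
          simp [hf, if_neg hi, ENNReal.zero_rpow_of_pos hpq.symm.pos])]
        refine Finset.sum_congr rfl fun i hi => ?_
        rw [hf]; simp only [if_pos hi]
        rw [← ENNReal.rpow_mul, hpq.sub_one_mul_conj]
      rw [hfg]
      calc ∑' i, f i * w i a ≤ (∑' i, f i ^ p') ^ (1/p') * (∑' i, w i a ^ p) ^ (1/p) := hold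
      _ = S ^ (1/p') * (∑' i, w i a ^ p) ^ (1/p) := by rw [hf']
    calc S = ∫⁻ a, ∑ i ∈ L, T i ^ (p-1) * w i a ∂μ := step1
    _ ≤ ∫⁻ a, S ^ (1/p') * (∑' i, w i a ^ p) ^ (1/p) ∂μ := lintegral_mono step2
    _ = S ^ (1/p') * R := lintegral_const_mul' _ _
        (ENNReal.rpow_lt_top_of_nonneg (one_div_nonneg.mpr hpq.symm.nonneg) hSfin).ne
  have hSp : S ^ (1/p) ≤ R := by
    have hsplit : S = S ^ (1/p') * S ^ (1/p) := by
      rw [← ENNReal.rpow_add_of_nonneg _ _ (one_div_nonneg.mpr hpq.symm.nonneg)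
        (one_div_nonneg.mpr hp0.le)]
      rw [show 1/p' + 1/p = 1 by have := hpq.inv_add_inv_eq_one; simp only [one_div]; linarith]
      exact (ENNReal.rpow_one S).symm
    have key2 : S ^ (1/p') * S ^ (1/p) ≤ S ^ (1/p') * R := hsplit ▸ key
    exact (ENNReal.mul_le_mul_iff_right
      (ENNReal.rpow_pos (pos_iff_ne_zero.mpr hS0) hSfin).ne'
      (ENNReal.rpow_lt_top_of_nonneg (one_div_nonneg.mpr hpq.symm.nonneg) hSfin).ne).mp key2
  calc S = (S ^ (1/p)) ^ p := by
        rw [← ENNReal.rpow_mul, one_div_mul_cancel hp0.ne', ENNReal.rpow_one]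
  _ ≤ R ^ p := ENNReal.rpow_le_rpow hSp hp0.le

/-- Sum of integrals over an a.e. disjoint countable family is at most the total integral. -/
lemma aux_tsum_setLIntegral_le {ι α : Type*} [Countable ι] [MeasurableSpace α]
    (μ : Measure α) (A : ι → Set α) (hm : ∀ i, NullMeasurableSet (A i) μ)
    (hd : Pairwise (Function.onFun (MeasureTheory.AEDisjoint μ) A)) (v : α → ℝ≥0∞) :
    ∑' i, ∫⁻ a in A i, v a ∂μ ≤ ∫⁻ a, v a ∂μ := by
  rw [← lintegral_iUnion₀ hm hd]
  exact setLIntegral_le_lintegral _ _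

/-! ### Geometry of the grid -/

lemma cube_eq_preimage (n : ℕ) (c : EuclideanSpace ℝ (Fin n)) (s : ℝ) :
    cube n c s = (MeasurableEquiv.toLp 2 (Fin n → ℝ)).symm ⁻¹'
      (Set.pi Set.univ fun i => Set.Icc (c i - s/2) (c i + s/2)) := by
  ext x
  simp only [cube, Set.mem_preimage, Set.mem_pi, Set.mem_univ, forall_true_left, Set.mem_Icc,
    Set.mem_setOf_eq, MeasurableEquiv.toLp_symm_apply]
  refine forall_congr' fun i => ?_
  rw [abs_sub_le_iff]
  constructor
  · rintro ⟨h1, h2⟩; constructor <;> linarith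
  · rintro ⟨h1, h2⟩; constructor <;> linarith

lemma volume_cube (n : ℕ) (c : EuclideanSpace ℝ (Fin n)) (s : ℝ) :
    volume (cube n c s) = (ENNReal.ofReal s) ^ n := by
  rw [cube_eq_preimage,
    (EuclideanSpace.volume_preserving_symm_measurableEquiv_toLp (Fin n)).measure_preimage_equiv,
    volume_pi_pi]
  simp [Real.volume_Icc]

lemma measurableSet_cube (n : ℕ) (c : EuclideanSpace ℝ (Fin n)) (s : ℝ) :
    MeasurableSet (cube n c s) := by
  rw [cube_eq_preimage]
  exact (MeasurableEquiv.toLp 2 (Fin n → ℝ)).symm.measurable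
    (MeasurableSet.univ_pi fun i => measurableSet_Icc)

lemma volume_Icc_inter {s : ℝ} (hs : 0 < s) {a b : ℤ} (hab : a ≠ b) :
    volume (Set.Icc (s*a - s/2) (s*a + s/2) ∩ Set.Icc (s*b - s/2) (s*b + s/2)) = 0 := by
  rw [Set.Icc_inter_Icc, Real.volume_Icc]
  rw [ENNReal.ofReal_eq_zero]
  rcases lt_or_gt_of_ne hab with h | h
  · have h' : (a:ℝ) + 1 ≤ (b:ℝ) := by exact_mod_cast Int.add_one_le_of_lt h
    calc min (s*a + s/2) (s*b + s/2) - max (s*a - s/2) (s*b - s/2)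
        ≤ (s*a + s/2) - (s*b - s/2) := sub_le_sub (min_le_left _ _) (le_max_right _ _)
    _ ≤ 0 := by nlinarith
  · have h' : (b:ℝ) + 1 ≤ (a:ℝ) := by exact_mod_cast Int.add_one_le_of_lt h
    calc min (s*a + s/2) (s*b + s/2) - max (s*a - s/2) (s*b - s/2)
        ≤ (s*b + s/2) - (s*a - s/2) := sub_le_sub (min_le_right _ _) (le_max_left _ _)
    _ ≤ 0 := by nlinarith

lemma volume_cube_inter (n : ℕ) {s : ℝ} (hs : 0 < s) {l l' : Fin n → ℤ} (hll : l ≠ l') :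
    volume (cube n (WithLp.toLp 2 (fun i => s * l i)) s ∩ cube n (WithLp.toLp 2 (fun i => s * l' i)) s) = 0 := by
  rw [cube_eq_preimage, cube_eq_preimage, ← Set.preimage_inter, ← Set.pi_inter_distrib,
    (EuclideanSpace.volume_preserving_symm_measurableEquiv_toLp (Fin n)).measure_preimage_equiv,
    volume_pi_pi]
  obtain ⟨i, hi⟩ := Function.ne_iff.mp hll
  exact Finset.prod_eq_zero (Finset.mem_univ i) (volume_Icc_inter hs hi)

/-- For `1 ≤ q, r ≤ 2`:
`(Σ_λ ‖Fχ_{Q_λ}‖₁²)^{1/2} ≤ C 2^{j(n/r′ + 1/q′)} ‖F‖_{L^q_t L^r_x}`, where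
`n/r′ + 1/q′ = n(1 − 1/r) + (1 − 1/q)`. -/
theorem sum_cube_L1_mixed (n : ℕ) (q r : ℝ) (hq1 : 1 ≤ q) (hq2 : q ≤ 2)
    (hr1 : 1 ≤ r) (hr2 : r ≤ 2) :
    ∃ C > (0:ℝ), ∀ (j : ℕ) (F : EuclideanSpace ℝ (Fin n) × ℝ → ℂ),
      (∑' l : (Fin n → ℤ) × ℤ,
          (∫⁻ z in gridCube n j l ((2 : ℝ) ^ j), (‖F z‖₊ : ℝ≥0∞)) ^ 2) ^ (1 / 2 : ℝ) ≤
        ENNReal.ofReal C *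
          ENNReal.ofReal ((2 : ℝ) ^ ((j : ℝ) * ((n : ℝ) * (1 - 1 / r) + (1 - 1 / q)))) *
          mixedNorm n q r F := by
  have hq0 : (0:ℝ) < q := lt_of_lt_of_le one_pos hq1
  have hr0 : (0:ℝ) < r := lt_of_lt_of_le one_pos hr1
  refine ⟨1, one_pos, fun j F => ?_⟩
  set s : ℝ := (2:ℝ)^j with hsdef
  have hs : 0 < s := by positivity
  set es : ℝ≥0∞ := ENNReal.ofReal s with hes
  have hestop : es ≠ ⊤ := ENNReal.ofReal_ne_top
  set nF : EuclideanSpace ℝ (Fin n) × ℝ → ℝ≥0∞ := fun z => (‖F z‖₊ : ℝ≥0∞) with hnF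
  -- a measurable pointwise minorant of `nF` with the same integrals on all grid cubes
  have hmin : ∀ l : (Fin n → ℤ) × ℤ, ∃ g : EuclideanSpace ℝ (Fin n) × ℝ → ℝ≥0∞,
      Measurable g ∧ g ≤ nF ∧
      ∫⁻ z in gridCube n j l s, nF z = ∫⁻ z in gridCube n j l s, g z := fun l =>
    exists_measurable_le_lintegral_eq (volume.restrict (gridCube n j l s)) nF
  choose g hgm hgle hgint using hmin
  set G : EuclideanSpace ℝ (Fin n) × ℝ → ℝ≥0∞ := fun z => ⨆ l, g l z with hGdef
  have hGm : Measurable G := Measurable.iSup hgm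
  have hGle : ∀ z, G z ≤ nF z := fun z => iSup_le fun l => hgle l z
  have hQG : ∀ l, ∫⁻ z in gridCube n j l s, nF z ≤ ∫⁻ z in gridCube n j l s, G z :=
    fun l => (hgint l).le.trans (lintegral_mono fun z => le_iSup (fun l' => g l' z) l)
  -- abbreviations
  set A : (Fin n → ℤ) → Set (EuclideanSpace ℝ (Fin n)) := fun m => cube n (WithLp.toLp 2 (fun i => s * m i)) s
    with hA
  set I : ℤ → Set ℝ := fun k => Set.Icc (s*k - s/2) (s*k + s/2) with hI
  have hQ : ∀ l : (Fin n → ℤ) × ℤ, gridCube n j l s = (A l.1) ×ˢ (I l.2) := fun l => rfl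
  have hGr : Measurable fun z : EuclideanSpace ℝ (Fin n) × ℝ => G z ^ r := hGm.pow_const r
  set K : (Fin n → ℤ) → ℝ → ℝ≥0∞ := fun m t => ∫⁻ x in A m, G (x, t) ^ r with hK
  have hKm : ∀ m, Measurable (K m) := fun m =>
    Measurable.lintegral_prod_left' (μ := volume.restrict (A m)) hGr
  set W : ℝ → ℝ≥0∞ := fun t => ∫⁻ x, G (x, t) ^ r with hW
  set N : ℝ≥0∞ := ∫⁻ t, W t ^ (q/r) with hN
  have h1r : (0:ℝ) ≤ 1 - 1/r := by rw [sub_nonneg, div_le_one hr0]; exact hr1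
  have h1q : (0:ℝ) ≤ 1 - 1/q := by rw [sub_nonneg, div_le_one hq0]; exact hq1
  set c1 : ℝ≥0∞ := es ^ ((n:ℝ) * (1 - 1/r)) with hc1
  set c2 : ℝ≥0∞ := es ^ (1 - 1/q) with hc2
  have hc1top : c1 ≠ ⊤ :=
    (ENNReal.rpow_lt_top_of_nonneg (mul_nonneg (Nat.cast_nonneg n) h1r) hestop).ne
  set B : (Fin n → ℤ) × ℤ → ℝ≥0∞ := fun l => (∫⁻ t in I l.2, K l.1 t ^ (q/r)) ^ (1/q) with hB
  -- Step A : Hölder on each cube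
  have stepA : ∀ l, (∫⁻ z in gridCube n j l s, G z) ≤ c1 * c2 * B l := by
    intro l
    have hprod : (∫⁻ z in gridCube n j l s, G z) =
        ∫⁻ t in I l.2, ∫⁻ x in A l.1, G (x, t) := by
      rw [hQ l, Measure.volume_eq_prod, ← Measure.prod_restrict,
        lintegral_prod_symm _ hGm.aemeasurable]
    rw [hprod]
    calc ∫⁻ t in I l.2, ∫⁻ x in A l.1, G (x, t)
        ≤ ∫⁻ t in I l.2, c1 * K l.1 t ^ (1/r) := by
          refine lintegral_mono fun t => ?_
          have h := aux_lintegral_le_measure_rpow (volume.restrict (A l.1))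
            (fun x => G (x, t)) (hGm.comp (measurable_prodMk_right)).aemeasurable hr1
          rw [Measure.restrict_apply_univ] at h
          have hvolA : volume (A l.1) = es ^ n := volume_cube n _ s
          have hcc : (volume (A l.1)) ^ (1 - 1/r) = c1 := by
            rw [hvolA, ← ENNReal.rpow_natCast es n, ← ENNReal.rpow_mul, hc1]
          rw [hcc] at h
          exact h
    _ = c1 * ∫⁻ t in I l.2, K l.1 t ^ (1/r) := lintegral_const_mul' _ _ hc1top
    _ ≤ c1 * (c2 * B l) := by
          refine mul_le_mul_right ?_ _
          have h := aux_lintegral_le_measure_rpow (volume.restrict (I l.2))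
            (fun t => K l.1 t ^ (1/r)) ((hKm l.1).pow_const _).aemeasurable hq1
          rw [Measure.restrict_apply_univ] at h
          have hIvol : volume (I l.2) = es := by
            rw [hI]; rw [Real.volume_Icc, hes]; congr 1; ring
          rw [hIvol] at h
          refine h.trans (le_of_eq ?_)
          rw [hc2, hB]
          congr 2
          refine lintegral_congr fun t => ?_
          rw [← ENNReal.rpow_mul]
          congr 1
          ring
    _ = c1 * c2 * B l := (mul_assoc _ _ _).symm
  -- Step B : the sum of the `B l ^ 2`
  have hBsum : ∑' l : (Fin n → ℤ) × ℤ, B l ^ 2 ≤ N ^ (2/q) := by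
    have h2q : (1:ℝ) ≤ 2/q := (one_le_div hq0).mpr hq2
    have h2r : (1:ℝ) ≤ 2/r := (one_le_div hr0).mpr hr2
    have hB2 : ∀ l : (Fin n → ℤ) × ℤ,
        B l ^ 2 = (∫⁻ t in I l.2, K l.1 t ^ (q/r)) ^ (2/q) := by
      intro l
      rw [hB, ← ENNReal.rpow_natCast ((∫⁻ t in I l.2, K l.1 t ^ (q/r)) ^ (1/q)) 2,
        ← ENNReal.rpow_mul]
      congr 1
      push_cast
      ring
    calc ∑' l : (Fin n → ℤ) × ℤ, B l ^ 2
        = ∑' (m : Fin n → ℤ) (k : ℤ), (∫⁻ t in I k, K m t ^ (q/r)) ^ (2/q) := by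
          simp_rw [hB2]; exact ENNReal.tsum_prod'
    _ ≤ ∑' m : Fin n → ℤ, (∫⁻ t, K m t ^ (q/r)) ^ (2/q) := by
          refine ENNReal.tsum_le_tsum fun m => ?_
          calc ∑' k : ℤ, (∫⁻ t in I k, K m t ^ (q/r)) ^ (2/q)
              ≤ (∑' k : ℤ, ∫⁻ t in I k, K m t ^ (q/r)) ^ (2/q) :=
                aux_tsum_rpow_le_rpow_tsum _ h2q
          _ ≤ (∫⁻ t, K m t ^ (q/r)) ^ (2/q) := by
                refine ENNReal.rpow_le_rpow ?_ (by positivity)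
                exact aux_tsum_setLIntegral_le volume I
                  (fun k => measurableSet_Icc.nullMeasurableSet)
                  (fun k k' h => volume_Icc_inter hs h) _
    _ ≤ ((∫⁻ t, (∑' m : Fin n → ℤ, (K m t ^ (q/r)) ^ (2/q)) ^ (1/(2/q)))) ^ (2/q) :=
          aux_minkowski_tsum_lintegral volume (fun m t => K m t ^ (q/r))
            (fun m => (hKm m).pow_const _) h2q
    _ ≤ N ^ (2/q) := by
          refine ENNReal.rpow_le_rpow ?_ (by positivity)
          refine lintegral_mono fun t => ?_
          have e1 : ∀ m : Fin n → ℤ, (K m t ^ (q/r)) ^ (2/q) = K m t ^ (2/r) := by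
            intro m; rw [← ENNReal.rpow_mul]; congr 1; field_simp
          have e2 : 1/(2/q) = q/2 := one_div_div _ _
          rw [e2]
          simp_rw [e1]
          have h3 : ∑' m : Fin n → ℤ, K m t ^ (2/r) ≤ (W t) ^ (2/r) := by
            calc ∑' m : Fin n → ℤ, K m t ^ (2/r) ≤ (∑' m : Fin n → ℤ, K m t) ^ (2/r) :=
                  aux_tsum_rpow_le_rpow_tsum _ h2r
            _ ≤ (W t) ^ (2/r) := by
                  refine ENNReal.rpow_le_rpow ?_ (by positivity)
                  exact aux_tsum_setLIntegral_le volume A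
                    (fun m => (measurableSet_cube n _ s).nullMeasurableSet)
                    (fun m m' h => volume_cube_inter n hs h) _
          calc (∑' m : Fin n → ℤ, K m t ^ (2/r)) ^ (q/2) ≤ ((W t) ^ (2/r)) ^ (q/2) :=
                ENNReal.rpow_le_rpow h3 (by positivity)
          _ = W t ^ (q/r) := by
                rw [← ENNReal.rpow_mul]; congr 1; field_simp
  -- assemble
  have hfinal : (∑' l : (Fin n → ℤ) × ℤ, (∫⁻ z in gridCube n j l s, nF z) ^ 2) ^ (1/2:ℝ)
      ≤ c1 * c2 * N ^ (1/q) := by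
    have h1 : ∑' l : (Fin n → ℤ) × ℤ, (∫⁻ z in gridCube n j l s, nF z) ^ 2
        ≤ (c1*c2)^2 * ∑' l : (Fin n → ℤ) × ℤ, B l ^ 2 := by
      rw [← ENNReal.tsum_mul_left]
      refine ENNReal.tsum_le_tsum fun l => ?_
      calc (∫⁻ z in gridCube n j l s, nF z) ^ 2 ≤ (c1 * c2 * B l) ^ 2 :=
            pow_le_pow_left' ((hQG l).trans (stepA l)) 2
      _ = (c1*c2)^2 * B l ^ 2 := mul_pow _ _ 2
    calc (∑' l : (Fin n → ℤ) × ℤ, (∫⁻ z in gridCube n j l s, nF z) ^ 2) ^ (1/2:ℝ)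
        ≤ ((c1*c2)^2 * N ^ (2/q)) ^ (1/2:ℝ) := by
          refine ENNReal.rpow_le_rpow (h1.trans ?_) (by norm_num)
          exact mul_le_mul_right hBsum _
    _ = c1 * c2 * N ^ (1/q) := by
          rw [ENNReal.mul_rpow_of_nonneg _ _ (by norm_num)]
          congr 1
          · rw [← ENNReal.rpow_natCast (c1*c2) 2, ← ENNReal.rpow_mul]
            norm_num
          · rw [← ENNReal.rpow_mul]
            congr 1
            ring
  have hNmix : N ^ (1/q:ℝ) ≤ mixedNorm n q r F := by
    rw [mixedNorm]
    refine ENNReal.rpow_le_rpow ?_ (by positivity)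
    refine lintegral_mono fun t => ?_
    have h1 : W t ≤ ∫⁻ x, (‖F (x, t)‖₊ : ℝ≥0∞) ^ r :=
      lintegral_mono fun x => ENNReal.rpow_le_rpow (hGle (x, t)) hr0.le
    calc W t ^ (q/r) ≤ (∫⁻ x, (‖F (x,t)‖₊ : ℝ≥0∞) ^ r) ^ (q/r) :=
          ENNReal.rpow_le_rpow h1 (by positivity)
    _ = ((∫⁻ x, (‖F (x,t)‖₊ : ℝ≥0∞) ^ r) ^ (1/r:ℝ)) ^ q := by
          rw [← ENNReal.rpow_mul]
          congr 1
          field_simp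
  have hconst : c1 * c2
      = ENNReal.ofReal ((2:ℝ) ^ ((j:ℝ) * ((n:ℝ)*(1-1/r) + (1-1/q)))) := by
    rw [hc1, hc2, ← ENNReal.rpow_add_of_nonneg _ _ (mul_nonneg (Nat.cast_nonneg n) h1r) h1q,
      hes, ENNReal.ofReal_rpow_of_pos hs]
    congr 1
    rw [hsdef, ← Real.rpow_natCast (2:ℝ) j, ← Real.rpow_mul (by norm_num : (0:ℝ) ≤ 2)]
  calc (∑' l : (Fin n → ℤ) × ℤ, (∫⁻ z in gridCube n j l s, nF z) ^ 2) ^ (1/2:ℝ)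
      ≤ c1 * c2 * N ^ (1/q:ℝ) := hfinal
  _ ≤ c1 * c2 * mixedNorm n q r F := mul_le_mul_right hNmix _
  _ = ENNReal.ofReal 1 *
        ENNReal.ofReal ((2:ℝ) ^ ((j:ℝ) * ((n:ℝ)*(1-1/r) + (1-1/q)))) *
        mixedNorm n q r F := by
      rw [ENNReal.ofReal_one, one_mul, hconst]

end
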